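/- Let M ∈ ℝ^{n×n} be Schur stable and W ∈ ℝ^{n×n} symmetric. Let X ∈ ℝ^{n×n} be symmetric and satisfy the Lyapunov inequality M X Mᵀ − X + W ⪯ 0 (i.e., −(MXMᵀ − X + W) is positive semidefinite), and let X₀ ∈ ℝ^{n×n} be symmetric and satisfy the Lyapunov equation M X₀ Mᵀ − X₀ + W = 0. Then X ⪰ X₀. -/

import Mathlib

open Matrix Filter

noncomputable section

attribute [local instance] Matrix.linftyOpNormedRing Matrix.linftyOpNormedAlgebra

/-- entry bound for the linfty operator norm -/
private lemma entry_nnnorm_le {n : ℕ} (A : Matrix (Fin n) (Fin n) ℂ) (i j : Fin n) :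
    ‖A i j‖₊ ≤ ‖A‖₊ := by
  rw [Matrix.linfty_opNNNorm_def]
  calc ‖A i j‖₊ ≤ ∑ j', ‖A i j'‖₊ :=
        Finset.single_le_sum (f := fun j' => ‖A i j'‖₊) (fun _ _ => zero_le) (Finset.mem_univ j)
    _ ≤ _ := Finset.le_sup (f := fun i => ∑ j', ‖A i j'‖₊) (Finset.mem_univ i)

private lemma pow_norm_tendsto_zero {A : Type*} [NormedRing A] [NormedAlgebra ℂ A]
    [CompleteSpace A] (a : A) (h : spectralRadius ℂ a < 1) :
    Tendsto (fun k : ℕ => ‖a ^ k‖) atTop (nhds 0) := by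
  obtain ⟨c, hc1, hc2⟩ := exists_between h
  have hctop : c ≠ ⊤ := (hc2.trans_le le_top).ne
  set c' : NNReal := c.toNNReal with hc'
  have hcc : (c' : ENNReal) = c := ENNReal.coe_toNNReal hctop
  have hc'1 : c' < 1 := by
    rw [← ENNReal.coe_lt_one_iff, hcc]; exact hc2
  have hGel := spectrum.pow_nnnorm_pow_one_div_tendsto_nhds_spectralRadius a
  have hev : ∀ᶠ k : ℕ in atTop, ((‖a ^ k‖₊ : ENNReal) ^ (1 / (k:ℝ))) < c :=
    hGel.eventually_lt_const hc1
  have hev2 : ∀ᶠ k : ℕ in atTop, ‖a ^ k‖ ≤ (c' : ℝ) ^ k := by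
    filter_upwards [hev, eventually_ge_atTop 1] with k hk hk1
    have h2 : ((‖a ^ k‖₊ : ENNReal) ^ (1 / (k:ℝ))) ^ (k:ℝ) ≤ c ^ (k:ℝ) :=
      ENNReal.rpow_le_rpow hk.le (Nat.cast_nonneg k)
    have hk0 : (k : ℝ) ≠ 0 := Nat.cast_ne_zero.mpr (by omega)
    rw [← ENNReal.rpow_mul, one_div, inv_mul_cancel₀ hk0, ENNReal.rpow_one, ← hcc,
      ENNReal.rpow_natCast, ← ENNReal.coe_pow, ENNReal.coe_le_coe] at h2
    calc ‖a ^ k‖ = ((‖a ^ k‖₊ : NNReal) : ℝ) := rfl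
      _ ≤ ((c' ^ k : NNReal) : ℝ) := by exact_mod_cast h2
      _ = (c' : ℝ) ^ k := by push_cast; ring
  refine squeeze_zero' (Eventually.of_forall fun k => norm_nonneg _) hev2 ?_
  exact tendsto_pow_atTop_nhds_zero_of_lt_one c'.coe_nonneg (by exact_mod_cast hc'1)

private lemma quad_transform {n : ℕ} (A D : Matrix (Fin n) (Fin n) ℝ) (u : Fin n → ℝ) :
    (Aᵀ *ᵥ u) ⬝ᵥ D *ᵥ (Aᵀ *ᵥ u) = u ⬝ᵥ (A * D * Aᵀ) *ᵥ u := by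
  rw [Matrix.mulVec_transpose, Matrix.dotProduct_mulVec, Matrix.vecMul_vecMul,
    show u ᵥ* A = Aᵀ *ᵥ u from (Matrix.mulVec_transpose A u).symm,
    Matrix.dotProduct_mulVec, Matrix.vecMul_vecMul, Matrix.dotProduct_mulVec]

end

open Matrix

noncomputable section

/-- A real square matrix is Schur stable if every complex eigenvalue has modulus < 1. -/
def IsSchur {n : ℕ} (M : Matrix (Fin n) (Fin n) ℝ) : Prop :=
  ∀ μ ∈ spectrum ℂ (M.map Complex.ofReal), ‖μ‖ < 1

/-- Comparison lemma for the discrete-time Lyapunov inequality. -/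
theorem stmt_15 {n : ℕ}
    (M W X X₀ : Matrix (Fin n) (Fin n) ℝ)
    (hM : IsSchur M) (hW : W.IsHermitian)
    (hX : X.IsHermitian)
    (hXineq : (-(M * X * Mᵀ - X + W)).PosSemidef)
    (hX₀ : X₀.IsHermitian)
    (hX₀eq : M * X₀ * Mᵀ - X₀ + W = 0) :
    (X - X₀).PosSemidef := by
  classical
  letI : NormedRing (Matrix (Fin n) (Fin n) ℂ) := Matrix.linftyOpNormedRing
  letI : NormedAlgebra ℂ (Matrix (Fin n) (Fin n) ℂ) := Matrix.linftyOpNormedAlgebra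
  set N : Matrix (Fin n) (Fin n) ℂ := M.map Complex.ofReal with hN
  -- spectral radius of N is < 1
  have hr : spectralRadius ℂ N < 1 := by
    rcases (spectrum ℂ N).eq_empty_or_nonempty with he | hne
    · rw [spectralRadius]
      simp [he]
    · refine spectrum.spectralRadius_lt_of_forall_lt_of_nonempty hne (r := 1) ?_
      intro z hz
      have := hM z hz
      rw [← ENNReal.coe_lt_one_iff] at *
      exact_mod_cast (by simpa using this : ‖z‖ < 1)
  have htend : Filter.Tendsto (fun k : ℕ => ‖N ^ k‖) Filter.atTop (nhds 0) :=
    pow_norm_tendsto_zero N hr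
  -- powers of M tend to zero entrywise
  have hNk : ∀ k : ℕ, N ^ k = (M ^ k).map Complex.ofReal := by
    intro k
    have h := map_pow (Complex.ofRealHom.mapMatrix :
      Matrix (Fin n) (Fin n) ℝ →+* Matrix (Fin n) (Fin n) ℂ) M k
    simp only [RingHom.mapMatrix_apply] at h
    rw [hN]
    exact h.symm
  have hMk : ∀ i j : Fin n, Filter.Tendsto (fun k : ℕ => (M ^ k) i j) Filter.atTop (nhds 0) := by
    intro i j
    refine squeeze_zero_norm (fun k => ?_) htend
    have h1 : ‖(N ^ k) i j‖ ≤ ‖N ^ k‖ := by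
      have := entry_nnnorm_le (N ^ k) i j
      exact_mod_cast this
    have h2 : ‖(N ^ k) i j‖ = ‖(M ^ k) i j‖ := by
      rw [hNk k, Matrix.map_apply, Complex.norm_real]
    rw [h2] at h1
    exact h1
  -- set up the quadratic forms
  set D : Matrix (Fin n) (Fin n) ℝ := X - X₀ with hD
  set Q : Matrix (Fin n) (Fin n) ℝ := -(M * X * Mᵀ - X + W) with hQdef
  have h1 : M * X₀ * Mᵀ = X₀ - W := by
    have h : M * X₀ * Mᵀ - (X₀ - W) = 0 := by rw [← hX₀eq]; abel
    exact sub_eq_zero.mp h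
  have hQ : D - M * D * Mᵀ = Q := by
    rw [hD, hQdef, Matrix.mul_sub, Matrix.sub_mul, h1]
    abel
  refine Matrix.PosSemidef.of_dotProduct_mulVec_nonneg (hX.sub hX₀) fun x => ?_
  rw [star_trivial]
  set y : ℕ → (Fin n → ℝ) := fun k => ((Mᵀ) ^ k) *ᵥ x with hy
  set g : ℕ → ℝ := fun k => y k ⬝ᵥ D *ᵥ y k with hg
  have hystep : ∀ k, y (k + 1) = Mᵀ *ᵥ y k := by
    intro k
    show (Mᵀ) ^ (k + 1) *ᵥ x = Mᵀ *ᵥ ((Mᵀ) ^ k *ᵥ x)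
    rw [pow_succ', Matrix.mulVec_mulVec]
  have hgstep : ∀ k, g (k + 1) ≤ g k := by
    intro k
    have hq : g k - g (k + 1) = y k ⬝ᵥ Q *ᵥ y k := by
      rw [hg]
      simp only [hystep k, quad_transform M D (y k)]
      rw [← hQ]
      simp only [hD, Matrix.sub_mulVec, dotProduct_sub]
    have hpos : 0 ≤ y k ⬝ᵥ Q *ᵥ y k := by
      have := hXineq.dotProduct_mulVec_nonneg (y k)
      simpa [star_trivial] using this
    linarith [hq ▸ hpos]
  have hle : ∀ k, g k ≤ g 0 := by
    intro k
    induction k with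
    | zero => exact le_rfl
    | succ m ih => exact (hgstep m).trans ih
  -- y k tends to 0 entrywise
  have hyto : ∀ i, Filter.Tendsto (fun k => y k i) Filter.atTop (nhds 0) := by
    intro i
    have : ∀ k, y k i = ∑ p, (M ^ k) p i * x p := by
      intro k
      rw [hy]
      simp [Matrix.mulVec, dotProduct, ← Matrix.transpose_pow, Matrix.transpose_apply]
    simp only [this]
    have : Filter.Tendsto (fun k => ∑ p, (M ^ k) p i * x p) Filter.atTop
        (nhds (∑ p : Fin n, 0 * x p)) :=
      tendsto_finset_sum _ fun p _ => (hMk p i).mul tendsto_const_nhds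
    simpa using this
  -- hence g tends to 0
  have hgto : Filter.Tendsto g Filter.atTop (nhds 0) := by
    have hgeq : ∀ k, g k = ∑ i, ∑ j, y k i * (D i j * y k j) := by
      intro k
      rw [hg]
      simp [dotProduct, Matrix.mulVec, Finset.mul_sum]
    refine Filter.Tendsto.congr (fun k => (hgeq k).symm) ?_
    have : Filter.Tendsto (fun k => ∑ i, ∑ j, y k i * (D i j * y k j)) Filter.atTop
        (nhds (∑ i : Fin n, ∑ j : Fin n, 0 * (D i j * 0))) :=
      tendsto_finset_sum _ fun i _ => tendsto_finset_sum _ fun j _ =>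
        (hyto i).mul ((hyto j).const_mul (D i j))
    simpa using this
  -- conclude
  have h0 : (0 : ℝ) ≤ g 0 := le_of_tendsto hgto (Filter.Eventually.of_forall hle)
  have : g 0 = x ⬝ᵥ D *ᵥ x := by
    rw [hg, hy]; simp
  rw [this] at h0
  exact h0
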